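/- Let R be an η-symmetric linear operator on ℝ^5 and λ1, λ2, λ3 ∈ ℝ (with any coincidences allowed among them). Then there do not exist vectors X1, X2, X3, X4, X5 forming a basis of ℝ^5 and satisfying the Jordan chain relations R X1 = λ1 X1, R X2 = λ1 X2 + X1, R X3 = λ2 X3, R X4 = λ2 X4 + X3, R X5 = λ3 X5. (A second order symmetric tensor on a 5-dimensional Lorentzian space cannot have Segre type [221] or any of its degeneracies [(22)1], [2(21)], [(221)].) -/
import Mathlib
set_option maxHeartbeats 800000


/-- The 5-dimensional Minkowski bilinear form of signature (-,+,+,+,+). -/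
def eta (u v : Fin 5 → ℝ) : ℝ :=
  -u 0 * v 0 + u 1 * v 1 + u 2 * v 2 + u 3 * v 3 + u 4 * v 4

theorem no_segre_type_221 (R : (Fin 5 → ℝ) →ₗ[ℝ] (Fin 5 → ℝ))
    (hR : ∀ u v : Fin 5 → ℝ, eta (R u) v = eta u (R v)) (lam1 lam2 lam3 : ℝ) :
    ¬ ∃ X1 X2 X3 X4 X5 : Fin 5 → ℝ,
      (LinearIndependent ℝ ![X1, X2, X3, X4, X5] ∧
        Submodule.span ℝ {X1, X2, X3, X4, X5} = ⊤) ∧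
      R X1 = lam1 • X1 ∧
      R X2 = lam1 • X2 + X1 ∧
      R X3 = lam2 • X3 ∧
      R X4 = lam2 • X4 + X3 ∧
      R X5 = lam3 • X5 := by
  rintro ⟨X1, X2, X3, X4, X5, ⟨hli, -⟩, e1, e2, e3, e4, e5⟩
  -- η(X1,X1) = 0
  have h11 : eta X1 X1 = 0 := by
    have h := hR X1 X2
    rw [e1, e2] at h
    simp only [eta, Pi.smul_apply, Pi.add_apply, smul_eq_mul] at h ⊢
    linarith [h]
  -- η(X3,X3) = 0
  have h33 : eta X3 X3 = 0 := by
    have h := hR X3 X4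
    rw [e3, e4] at h
    simp only [eta, Pi.smul_apply, Pi.add_apply, smul_eq_mul] at h ⊢
    linarith [h]
  -- η(X1,X3) = 0
  have h13 : eta X1 X3 = 0 := by
    rcases eq_or_ne lam1 lam2 with hl | hl
    · have h := hR X1 X4
      rw [e1, e4, hl] at h
      simp only [eta, Pi.smul_apply, Pi.add_apply, smul_eq_mul] at h ⊢
      linarith [h]
    · have h := hR X1 X3
      rw [e1, e3] at h
      simp only [eta, Pi.smul_apply, Pi.add_apply, smul_eq_mul] at h ⊢
      have h' : (lam1 - lam2) * (-X1 0 * X3 0 + X1 1 * X3 1 + X1 2 * X3 2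
          + X1 3 * X3 3 + X1 4 * X3 4) = 0 := by ring_nf; ring_nf at h; linarith
      have := sub_ne_zero.mpr hl
      exact (mul_eq_zero.mp h').resolve_left this
  -- X1 and X3 are linearly independent
  have hpair : LinearIndependent ℝ ![X1, X3] := by
    have hinj : Function.Injective (![0, 2] : Fin 2 → Fin 5) := by
      decide
    have := hli.comp (![0, 2] : Fin 2 → Fin 5) hinj
    convert this using 1
    ext i
    fin_cases i <;> rfl
  -- X1 ≠ 0
  have hX1 : X1 ≠ 0 := by
    have := hpair.ne_zero 0
    simpa using this
  simp only [eta] at h11 h33 h13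
  -- show X1 0 ≠ 0
  have hX10 : X1 0 ≠ 0 := by
    intro h0
    apply hX1
    have hs : X1 1 ^ 2 + X1 2 ^ 2 + X1 3 ^ 2 + X1 4 ^ 2 = 0 := by nlinarith [h11]
    funext i
    have h1 : X1 1 = 0 := by nlinarith [sq_nonneg (X1 1), sq_nonneg (X1 2), sq_nonneg (X1 3), sq_nonneg (X1 4)]
    have h2 : X1 2 = 0 := by nlinarith [sq_nonneg (X1 1), sq_nonneg (X1 2), sq_nonneg (X1 3), sq_nonneg (X1 4)]
    have h3 : X1 3 = 0 := by nlinarith [sq_nonneg (X1 1), sq_nonneg (X1 2), sq_nonneg (X1 3), sq_nonneg (X1 4)]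
    have h4 : X1 4 = 0 := by nlinarith [sq_nonneg (X1 1), sq_nonneg (X1 2), sq_nonneg (X1 3), sq_nonneg (X1 4)]
    fin_cases i <;> simp only [Pi.zero_apply] <;> assumption
  -- proportionality: X3 0 • X1 = X1 0 • X3
  have hprop : ∀ i, X3 0 * X1 i = X1 0 * X3 i := by
    have key : (X3 0 * X1 1 - X1 0 * X3 1) ^ 2 + (X3 0 * X1 2 - X1 0 * X3 2) ^ 2
        + (X3 0 * X1 3 - X1 0 * X3 3) ^ 2 + (X3 0 * X1 4 - X1 0 * X3 4) ^ 2 = 0 := by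
      linear_combination X3 0 ^ 2 * h11 + X1 0 ^ 2 * h33 - 2 * X1 0 * X3 0 * h13
    intro i
    have k1 : X3 0 * X1 1 - X1 0 * X3 1 = 0 := by
      nlinarith [sq_nonneg (X3 0 * X1 1 - X1 0 * X3 1), sq_nonneg (X3 0 * X1 2 - X1 0 * X3 2),
        sq_nonneg (X3 0 * X1 3 - X1 0 * X3 3), sq_nonneg (X3 0 * X1 4 - X1 0 * X3 4)]
    have k2 : X3 0 * X1 2 - X1 0 * X3 2 = 0 := by
      nlinarith [sq_nonneg (X3 0 * X1 1 - X1 0 * X3 1), sq_nonneg (X3 0 * X1 2 - X1 0 * X3 2),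
        sq_nonneg (X3 0 * X1 3 - X1 0 * X3 3), sq_nonneg (X3 0 * X1 4 - X1 0 * X3 4)]
    have k3 : X3 0 * X1 3 - X1 0 * X3 3 = 0 := by
      nlinarith [sq_nonneg (X3 0 * X1 1 - X1 0 * X3 1), sq_nonneg (X3 0 * X1 2 - X1 0 * X3 2),
        sq_nonneg (X3 0 * X1 3 - X1 0 * X3 3), sq_nonneg (X3 0 * X1 4 - X1 0 * X3 4)]
    have k4 : X3 0 * X1 4 - X1 0 * X3 4 = 0 := by
      nlinarith [sq_nonneg (X3 0 * X1 1 - X1 0 * X3 1), sq_nonneg (X3 0 * X1 2 - X1 0 * X3 2),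
        sq_nonneg (X3 0 * X1 3 - X1 0 * X3 3), sq_nonneg (X3 0 * X1 4 - X1 0 * X3 4)]
    fin_cases i <;> simp <;> linarith
  -- X3 = (X3 0 / X1 0) • X1, contradicting linear independence
  have hX3 : X3 = (X3 0 / X1 0) • X1 := by
    funext i
    have := hprop i
    simp only [Pi.smul_apply, smul_eq_mul]
    field_simp
    linarith
  rw [LinearIndependent.pair_iff] at hpair
  have := (hpair (X3 0 / X1 0) (-1) (by rw [← hX3]; simp)).2
  norm_num at this
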